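/- For every complex number x with |x| < 1, the Artin–Hasse-type identity holds in logarithmic form: the series ∑_{n≥1} (μ(n)/n)·log(1 − x^n) converges and equals −x, where μ is the Möbius function and log is the principal branch of the complex logarithm. Equivalently, exp(x) = ∏_{n≥1} (1 − x^n)^{−μ(n)/n}. -/

import Mathlib

open Complex ArithmeticFunction

private lemma moebius_sum_aux (k : ℕ) (hk : k ≠ 0) :
    ∑ p ∈ Nat.divisorsAntidiagonal k, ((moebius p.1 : ℂ)) = if k = 1 then 1 else 0 := by
  have h := congrArg (fun F : ArithmeticFunction ℂ => F k)
    (coe_moebius_mul_coe_zeta (R := ℂ))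
  simp only [mul_apply, one_apply] at h
  rw [← h]
  refine Finset.sum_congr rfl fun p hp => ?_
  have h2 : p.2 ≠ 0 := by
    obtain ⟨h1, -⟩ := Nat.mem_divisorsAntidiagonal.mp hp
    exact fun h0 => hk (by simpa [h0] using h1.symm)
  simp [natCoe_apply, zeta_apply_ne h2, intCoe_apply]

private lemma summable_aux (x : ℂ) (hx : ‖x‖ < 1) :
    Summable (fun p : ℕ × ℕ =>
      (moebius p.1 : ℂ) * x ^ (p.1 * p.2) / ((p.1 * p.2 : ℕ) : ℂ)) := by
  by_cases hx0 : x = 0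
  · have hzero : (fun p : ℕ × ℕ =>
        (moebius p.1 : ℂ) * x ^ (p.1 * p.2) / ((p.1 * p.2 : ℕ) : ℂ)) = fun _ => 0 := by
      funext p
      rcases Nat.eq_zero_or_pos (p.1 * p.2) with h | h
      · simp [h]
      · simp [hx0, zero_pow h.ne']
    rw [hzero]; exact summable_zero
  · have hr0 : 0 < ‖x‖ := norm_pos_iff.mpr hx0
    have hgeo : Summable (fun n : ℕ => ‖x‖ ^ n) :=
      summable_geometric_of_lt_one (norm_nonneg x) hx
    have hb : Summable (fun p : ℕ × ℕ => (1/‖x‖) * (‖x‖ ^ p.1 * ‖x‖ ^ p.2)) :=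
      ((hgeo.mul_of_nonneg hgeo (fun n => pow_nonneg (norm_nonneg x) n)
        (fun n => pow_nonneg (norm_nonneg x) n)).mul_left _)
    refine Summable.of_norm_bounded hb ?_
    rintro ⟨a, b⟩
    rcases Nat.eq_zero_or_pos a with rfl | ha
    · simp
      positivity
    rcases Nat.eq_zero_or_pos b with rfl | hb'
    · simp
      positivity
    have hk1 : 1 ≤ a * b := Nat.one_le_iff_ne_zero.mpr (Nat.mul_ne_zero ha.ne' hb'.ne')
    have hnorm : ‖(moebius (a, b).1 : ℂ) * x ^ ((a, b).1 * (a, b).2) /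
        (((a, b).1 * (a, b).2 : ℕ) : ℂ)‖ ≤ ‖x‖ ^ (a * b) := by
      simp only [norm_div, norm_mul, norm_pow]
      rw [Complex.norm_natCast]
      have h1 : ‖((moebius a : ℤ) : ℂ)‖ ≤ 1 := by
        rw [Complex.norm_intCast]
        exact_mod_cast (abs_moebius_le_one (n := a))
      calc ‖((moebius a : ℤ) : ℂ)‖ * ‖x‖ ^ (a * b) / ((a * b : ℕ) : ℝ)
          ≤ 1 * ‖x‖ ^ (a * b) / 1 := by
            apply div_le_div₀ (by positivity)
              (mul_le_mul_of_nonneg_right h1 (by positivity)) one_pos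
            exact_mod_cast hk1
        _ = ‖x‖ ^ (a * b) := by ring
    refine hnorm.trans ?_
    have hle : a + b ≤ a * b + 1 := by nlinarith
    have h2 : ‖x‖ ^ (a * b) * ‖x‖ ≤ ‖x‖ ^ a * ‖x‖ ^ b := by
      calc ‖x‖ ^ (a * b) * ‖x‖ = ‖x‖ ^ (a * b + 1) := by rw [pow_succ]
        _ ≤ ‖x‖ ^ (a + b) := pow_le_pow_of_le_one (norm_nonneg x) hx.le hle
        _ = ‖x‖ ^ a * ‖x‖ ^ b := pow_add _ _ _
    rw [one_div, inv_mul_eq_div, le_div_iff₀ hr0]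
    exact h2

private lemma key_hasSum (x : ℂ) (hx : ‖x‖ < 1) :
    HasSum (fun p : ℕ × ℕ =>
      (moebius p.1 : ℂ) * x ^ (p.1 * p.2) / ((p.1 * p.2 : ℕ) : ℂ)) x := by
  set F : ℕ × ℕ → ℂ := fun p =>
    (moebius p.1 : ℂ) * x ^ (p.1 * p.2) / ((p.1 * p.2 : ℕ) : ℂ) with hF
  have hs := summable_aux x hx
  have h1 := hs.hasSum.tsum_fiberwise (fun p => p.1 * p.2)
  have h2 : (fun k : ℕ => ∑' p : (fun p : ℕ × ℕ => p.1 * p.2) ⁻¹' {k}, F p) =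
      fun k : ℕ => if k = 1 then x else 0 := by
    funext k
    rcases eq_or_ne k 0 with rfl | hk
    · have hz : ∀ q : ((fun p : ℕ × ℕ => p.1 * p.2) ⁻¹' {0} : Set (ℕ × ℕ)), F q = 0 := by
        rintro ⟨⟨a, b⟩, hq⟩
        have hq' : a * b = 0 := hq
        rcases Nat.mul_eq_zero.mp hq' with rfl | rfl
        · simp [hF]
        · simp [hF, hq']
      rw [tsum_congr hz]
      simp
    · have hset : (fun p : ℕ × ℕ => p.1 * p.2) ⁻¹' {k} = ↑(Nat.divisorsAntidiagonal k) := by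
        ext p
        simp [Nat.mem_divisorsAntidiagonal, hk]
      rw [hset, Finset.tsum_subtype']
      have hterm : ∀ p ∈ Nat.divisorsAntidiagonal k,
          F p = (moebius p.1 : ℂ) * (x ^ k / (k : ℂ)) := by
        intro p hp
        obtain ⟨h1', -⟩ := Nat.mem_divisorsAntidiagonal.mp hp
        rw [hF]
        simp only [h1']
        ring
      rw [Finset.sum_congr rfl hterm, ← Finset.sum_mul, moebius_sum_aux k hk]
      rcases eq_or_ne k 1 with rfl | hk1
      · simp
      · simp [hk1]
  rw [h2] at h1
  have h3 : HasSum (fun k : ℕ => if k = 1 then x else 0) x := hasSum_ite_eq 1 x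
  have h4 : ∑' p, F p = x := h1.unique h3
  rw [← h4]
  exact hs.hasSum

theorem artin_hasse_log (x : ℂ) (hx : ‖x‖ < 1) :
    HasSum (fun n : ℕ => ((moebius n : ℂ) / n) * Complex.log (1 - x ^ n)) (-x) ∧
    Multipliable (fun n : ℕ => (1 - x ^ n) ^ (-(moebius n : ℂ) / n)) ∧
    ∏' n : ℕ, (1 - x ^ n) ^ (-(moebius n : ℂ) / n) = Complex.exp x := by
  have hmain : HasSum (fun n : ℕ =>
      -(((moebius n : ℂ) / n) * Complex.log (1 - x ^ n))) x := by
    refine (key_hasSum x hx).prod_fiberwise ?_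
    intro n
    rcases eq_or_ne n 0 with rfl | hn
    · have hzero : (fun c : ℕ =>
          (moebius (0 : ℕ) : ℂ) * x ^ (0 * c) / ((0 * c : ℕ) : ℂ)) = fun _ => 0 := by
        funext c; simp
      rw [hzero]
      simpa using (hasSum_zero : HasSum (fun _ : ℕ => (0 : ℂ)) 0)
    · have hxn : ‖x ^ n‖ < 1 := by
        rw [norm_pow]
        exact pow_lt_one₀ (norm_nonneg x) hx hn
      have h := (hasSum_taylorSeries_neg_log hxn).mul_left ((moebius n : ℂ) / n)
      have hfe : (fun c : ℕ => (moebius n : ℂ) * x ^ (n * c) / ((n * c : ℕ) : ℂ)) =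
          fun c : ℕ => (moebius n : ℂ) / n * ((x ^ n) ^ c / c) := by
        funext c
        push_cast
        rw [pow_mul, div_mul_div_comm]
      rw [hfe, ← mul_neg]
      exact h
  have hsum1 : HasSum (fun n : ℕ =>
      ((moebius n : ℂ) / n) * Complex.log (1 - x ^ n)) (-x) := by
    simpa using hmain.neg
  have hprodeq : (Complex.exp ∘ fun n : ℕ =>
      -(((moebius n : ℂ) / n) * Complex.log (1 - x ^ n))) =
      fun n : ℕ => (1 - x ^ n) ^ (-(moebius n : ℂ) / n) := by
    funext n
    rcases eq_or_ne n 0 with rfl | hn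
    · simp [Complex.cpow_def]
    · have hxn : ‖x ^ n‖ < 1 := by
        rw [norm_pow]
        exact pow_lt_one₀ (norm_nonneg x) hx hn
      have h1 : (1 : ℂ) - x ^ n ≠ 0 := by
        intro hc
        rw [sub_eq_zero] at hc
        rw [← hc] at hxn
        simp at hxn
      rw [Function.comp_apply, Complex.cpow_def_of_ne_zero h1]
      congr 1
      ring
  have hprod : HasProd (fun n : ℕ => (1 - x ^ n) ^ (-(moebius n : ℂ) / n)) (Complex.exp x) := by
    rw [← hprodeq]
    exact hmain.cexp
  exact ⟨hsum1, hprod.multipliable, hprod.tprod_eq⟩
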